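/- Let r_0, ..., r_h be positive integers with d_1 = r_0, d_{k+1} = gcd(d_k, r_k), satisfying d_{h+1} = 1 and r_{k+1}·d_{k+1} > r_k·d_k for all 1 ≤ k ≤ h−1, and such that for all k, r_k·(d_k/d_{k+1}) ∈ ⟨r_0, ..., r_{k-1}⟩. Then r_0, ..., r_h form a minimal system of generators of the semigroup ⟨r_0,...,r_h⟩ if and only if d_1 > d_2 > ... > d_h > d_{h+1} = 1. -/
import Mathlib


/-- `x` belongs to the subsemigroup of `ℕ` generated by `r 0, ..., r (k-1)`
(nonnegative integer combinations). -/
def InSemigroupGenBy (r : ℕ → ℕ) (k x : ℕ) : Prop :=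
  ∃ a : ℕ → ℕ, x = ∑ i ∈ Finset.range k, a i * r i

/-- Let `r 0, ..., r h` be positive integers with `d 1 = r 0`,
`d (k+1) = gcd (d k) (r k)`, `d (h+1) = 1`, satisfying
`r (k+1) * d (k+1) > r k * d k` for `1 ≤ k ≤ h-1`, and such that
`r k * (d k / d (k+1)) ∈ ⟨r 0, ..., r (k-1)⟩` for all `1 ≤ k ≤ h`. Then
`r 0, ..., r h` is a minimal system of generators of `⟨r 0, ..., r h⟩`
(i.e. `r k ∉ ⟨r 0, ..., r (k-1)⟩` for `k = 1, ..., h`) if and only if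
`d 1 > d 2 > ... > d h > d (h+1) = 1`. -/
theorem stmt5 (h : ℕ) (r d : ℕ → ℕ) (hh : 1 ≤ h)
    (hrpos : ∀ k, k ≤ h → 0 < r k)
    (hd1 : d 1 = r 0)
    (hd : ∀ k, 1 ≤ k → k ≤ h → d (k + 1) = Nat.gcd (d k) (r k))
    (hdh1 : d (h + 1) = 1)
    (hstar : ∀ k, 1 ≤ k → k ≤ h - 1 → r k * d k < r (k + 1) * d (k + 1))
    (hmem : ∀ k, 1 ≤ k → k ≤ h → InSemigroupGenBy r k (r k * (d k / d (k + 1)))) :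
    (∀ k, 1 ≤ k → k ≤ h → ¬ InSemigroupGenBy r k (r k)) ↔
      (∀ k, 1 ≤ k → k ≤ h → d (k + 1) < d k) := by
  -- positivity of d k for 1 ≤ k ≤ h+1
  have hdpos : ∀ k, 1 ≤ k → k ≤ h + 1 → 0 < d k := by
    intro k hk1 hkh
    induction k with
    | zero => omega
    | succ n ih =>
      rcases Nat.eq_or_lt_of_le hk1 with h1 | h1
      · have : n = 0 := by omega
        subst this
        rw [hd1]; exact hrpos 0 (by omega)
      · have hn1 : 1 ≤ n := by omega
        have hnh : n ≤ h := by omega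
        rw [hd n hn1 hnh]
        exact Nat.gcd_pos_of_pos_right _ (hrpos n hnh)
  -- divisibility chain: d n ∣ d m for m ≤ n
  have hchain : ∀ n, 1 ≤ n → n ≤ h + 1 → ∀ m, 1 ≤ m → m ≤ n → d n ∣ d m := by
    intro n
    induction n with
    | zero => omega
    | succ n ih =>
      intro hn1 hnh m hm1 hmn
      rcases Nat.eq_or_lt_of_le hmn with h1 | h1
      · rw [h1]
      · have hn1' : 1 ≤ n := by omega
        have hdn : d (n + 1) ∣ d n := by
          rw [hd n hn1' (by omega)]; exact Nat.gcd_dvd_left _ _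
        exact hdn.trans (ih hn1' (by omega) m hm1 (by omega))
  -- d (i+1) ∣ r i for i ≤ h
  have hdr : ∀ i, i ≤ h → d (i + 1) ∣ r i := by
    intro i hih
    rcases Nat.eq_zero_or_pos i with h0 | h0
    · subst h0; rw [hd1]
    · rw [hd i h0 hih]; exact Nat.gcd_dvd_right _ _
  constructor
  · intro hmin k hk1 hkh
    have hdvd : d (k + 1) ∣ d k := by
      rw [hd k hk1 hkh]; exact Nat.gcd_dvd_left _ _
    have hle : d (k + 1) ≤ d k := Nat.le_of_dvd (hdpos k hk1 (by omega)) hdvd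
    rcases Nat.eq_or_lt_of_le hle with heq | hlt
    · exfalso
      have h1 : d k / d (k + 1) = 1 := by
        rw [heq, Nat.div_self (hdpos k hk1 (by omega))]
      have := hmem k hk1 hkh
      rw [h1, mul_one] at this
      exact hmin k hk1 hkh this
    · exact hlt
  · intro hdec k hk1 hkh hin
    obtain ⟨a, ha⟩ := hin
    have hdvd : d k ∣ r k := by
      rw [ha]
      refine Finset.dvd_sum ?_
      intro i hi
      have hik : i < k := Finset.mem_range.mp hi
      have h1 : d k ∣ d (i + 1) :=
        hchain k hk1 (by omega) (i + 1) (by omega) (by omega)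
      exact Dvd.dvd.mul_left (h1.trans (hdr i (by omega))) _
    have : d (k + 1) = d k := by
      rw [hd k hk1 hkh, Nat.gcd_eq_left hdvd]
    have := hdec k hk1 hkh
    omega
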